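/- Let m ≥ 1, let f(1)=2 and f(m)=(2m−2)·lcm(1,...,2m−1) for m ≥ 2, and let β be a positive integer divisible by f(m). Then for any non-negative integers x_0,...,x_{2m} satisfying Σ_{i=0}^{2m} i·x_i = 2mβ and Σ_{i=0}^{2m} x_i = 2β, there exist non-negative integers x_{i,j} (0 ≤ i ≤ 2m, 1 ≤ j ≤ 2β/f(m)) such that Σ_i i·x_{i,j} = m·f(m) and Σ_i x_{i,j} = f(m) for each j, and Σ_j x_{i,j} = x_i for each i. -/

import Mathlib

/-- `f(1) = 2` and `f(m) = (2m−2)·lcm(1,…,2m−1)` for `m ≥ 2`. -/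
def fJP (m : ℕ) : ℕ :=
  if m = 1 then 2 else (2 * m - 2) * (Finset.Icc 1 (2 * m - 1)).lcm id

lemma fJP_eq (m : ℕ) (hm : 2 ≤ m) :
    fJP m = (2 * m - 2) * (Finset.Icc 1 (2 * m - 1)).lcm id := by
  unfold fJP; rw [if_neg (by omega)]

lemma dvd_L {m t : ℕ} (h1 : 1 ≤ t) (h2 : t ≤ 2*m - 1) :
    t ∣ (Finset.Icc 1 (2 * m - 1)).lcm id := by
  exact Finset.dvd_lcm (by simp [Finset.mem_Icc]; omega)

lemma L_pos (m : ℕ) : 0 < (Finset.Icc 1 (2 * m - 1)).lcm id := by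
  rw [Nat.pos_iff_ne_zero, Ne, Finset.lcm_eq_zero_iff]
  intro h
  simp only [Set.mem_image, Finset.mem_coe, Finset.mem_Icc, id] at h
  obtain ⟨x, hx, h0⟩ := h
  omega

lemma fJP_pos (m : ℕ) (hm : 1 ≤ m) : 0 < fJP m := by
  rcases eq_or_lt_of_le hm with h | h
  · simp [fJP, ← h]
  · rw [fJP_eq m (by omega)]
    exact Nat.mul_pos (by omega) (L_pos m)

lemma dvd_fJP (m t : ℕ) (hm : 1 ≤ m) (h1 : 1 ≤ t) (h2 : t ≤ 2 * m) : t ∣ fJP m := by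
  rcases eq_or_lt_of_le hm with h | h
  · subst h
    interval_cases t
    · simp [fJP]
    · simp [fJP]
  · rw [fJP_eq m (by omega)]
    rcases Nat.lt_or_ge t (2*m) with ht | ht
    · exact Dvd.dvd.mul_left (dvd_L h1 (by omega)) _
    · have : t = 2 * m := by omega
      subst this
      -- 2m ∣ (2m-2) * L  since m ∣ L and 2 ∣ 2m-2
      have hmL : m ∣ (Finset.Icc 1 (2 * m - 1)).lcm id := dvd_L (by omega) (by omega)
      obtain ⟨k, hk⟩ := hmL
      obtain ⟨j, hj⟩ : (2:ℕ) ∣ 2*m - 2 := ⟨m - 1, by omega⟩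
      rw [hk, hj]
      exact ⟨j * k, by ring⟩

lemma twoL_dvd_fJP (m : ℕ) (hm : 1 ≤ m) :
    2 * (Finset.Icc 1 (2 * m - 1)).lcm id ∣ fJP m := by
  rcases eq_or_lt_of_le hm with h | h
  · simp [fJP, ← h]
  · rw [fJP_eq m (by omega)]
    obtain ⟨j, hj⟩ : (2:ℕ) ∣ 2*m - 2 := ⟨m - 1, by omega⟩
    rw [hj]
    exact ⟨j, by ring⟩


lemma chunk : ∀ (l : List (ℕ × ℕ)) (c : ℕ → ℕ) (v : ℕ),
    List.Chain' (fun a b => b.2 ∣ a.2) l →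
    (∀ p ∈ l, 0 < p.1 ∧ p.1 ∣ p.2 ∧ 0 < p.2) →
    (l.map Prod.fst).Nodup →
    (∀ p, l.head? = some p → p.2 ∣ v) →
    (l = [] → v = 0) →
    v + (l.map (fun p => p.2 - p.1)).sum ≤ (l.map (fun p => p.1 * c p.1)).sum →
    ∃ b : ℕ → ℕ, (∀ t, b t ≤ c t) ∧ (∀ t, t ∉ l.map Prod.fst → b t = 0) ∧
      (l.map (fun p => p.1 * b p.1)).sum = v := by
  intro l
  induction l with
  | nil =>
    intro c v _ _ _ _ hnil _
    exact ⟨fun _ => 0, fun t => Nat.zero_le _, fun t _ => rfl, by simp [hnil rfl]⟩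
  | cons p rest ih =>
    intro c v hchain hpos hnodup hhead hnil hcap
    obtain ⟨t, D⟩ := p
    have ht0 : 0 < t := (hpos (t, D) (by simp)).1
    have htD : t ∣ D := (hpos (t, D) (by simp)).2.1
    have hD0 : 0 < D := (hpos (t, D) (by simp)).2.2
    have htleD : t ≤ D := Nat.le_of_dvd hD0 htD
    have hDv : D ∣ v := hhead (t, D) rfl
    have htv : t ∣ v := htD.trans hDv
    have hnt : t ∉ rest.map Prod.fst := by
      simp only [List.map_cons, List.nodup_cons] at hnodup; exact hnodup.1
    have hndrest : (rest.map Prod.fst).Nodup := by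
      simp only [List.map_cons, List.nodup_cons] at hnodup; exact hnodup.2
    set κ : ℕ := D * (t * c t / D) with hκdef
    have hdm := Nat.div_add_mod (t * c t) D
    have hκle : κ + (t * c t) % D = t * c t := hdm
    have htmod : t ∣ (t * c t) % D := by
      have h1 : (t * c t) % D = t * c t - κ := by omega
      rw [h1]
      exact Nat.dvd_sub (Dvd.intro _ rfl) (htD.mul_right _)
    have hmodlt : (t * c t) % D < D := Nat.mod_lt _ hD0
    have hmodle : (t * c t) % D ≤ D - t := by
      obtain ⟨k, hk⟩ := htmod
      obtain ⟨d, hd⟩ := htD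
      have hkd : k < d := by
        by_contra hc
        push_neg at hc
        have : t * d ≤ t * k := Nat.mul_le_mul_left t hc
        omega
      have : t * (k + 1) ≤ t * d := Nat.mul_le_mul_left t (by omega)
      rw [Nat.mul_add, Nat.mul_one] at this
      omega
    have hDκ : D ∣ κ := Dvd.intro _ rfl
    have htκ : t ∣ κ := htD.trans hDκ
    simp only [List.map_cons, List.sum_cons] at hcap
    by_cases hvκ : v ≤ κ
    · -- finish with just this pile
      refine ⟨fun s => if s = t then v / t else 0, ?_, ?_, ?_⟩
      · intro s
        by_cases hs : s = t
        · show (if s = t then v / t else 0) ≤ c s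
          rw [if_pos hs, hs]
          have h1 : v / t ≤ (t * c t) / t := Nat.div_le_div_right (by omega)
          rwa [Nat.mul_div_cancel_left _ ht0] at h1
        · simp [hs]
      · intro s hs
        have hs1 : s ≠ t := fun h => hs (by simp [h])
        show (if s = t then v / t else 0) = 0
        rw [if_neg hs1]
      · have h1 : t * (v / t) = v := Nat.mul_div_cancel' htv
        have h2 : (rest.map (fun p => p.1 * if p.1 = t then v / t else 0)).sum = 0 := by
          apply List.sum_eq_zero
          intro x hx
          simp only [List.mem_map] at hx
          obtain ⟨q, hq, rfl⟩ := hx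
          have hq1 : q.1 ≠ t := by
            intro h; exact hnt (by simpa [← h] using List.mem_map_of_mem (f := Prod.fst) hq)
          simp [hq1]
        show (((t, D) :: rest).map (fun p => p.1 * if p.1 = t then v / t else 0)).sum = v
        rw [List.map_cons, List.sum_cons, h2, if_pos rfl, h1]
        omega
    · push_neg at hvκ
      -- κ < v; use full κ from this pile and recurse
      have hκtc : κ ≤ t * c t := by omega
      set v' := v - κ with hv'
      -- rest nonempty
      rcases rest with _ | ⟨q, rest'⟩
      · exfalso
        simp only [List.map_nil, List.sum_nil, add_zero] at hcap
        omega
      · have hchain' : List.Chain' (fun a b => b.2 ∣ a.2) (q :: rest') :=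
          (List.isChain_cons_cons.mp hchain).2
        have hqD : q.2 ∣ D := (List.isChain_cons_cons.mp hchain).1
        have hq2v' : q.2 ∣ v' := by
          exact Nat.dvd_sub (hqD.trans hDv) (hqD.trans hDκ)
        obtain ⟨b', hb'le, hb'zero, hb'sum⟩ :=
          ih c v' hchain' (fun p hp => hpos p (List.mem_cons_of_mem _ hp)) hndrest
            (by rintro p hp; simp only [List.head?_cons, Option.some.injEq] at hp
                subst hp; exact hq2v')
            (by intro h; simp at h)
            (by simp only [List.map_cons, List.sum_cons] at *
                omega)
        refine ⟨fun s => if s = t then κ / t else b' s, ?_, ?_, ?_⟩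
        · intro s
          by_cases hs : s = t
          · show (if s = t then κ / t else b' s) ≤ c s
            rw [if_pos hs, hs]
            have h1 : κ / t ≤ (t * c t) / t := Nat.div_le_div_right (by omega)
            rwa [Nat.mul_div_cancel_left _ ht0] at h1
          · simpa [hs] using hb'le s
        · intro s hs
          have hs1 : s ≠ t := fun h => hs (by simp [h])
          have hs2 : s ∉ (q :: rest').map Prod.fst := fun h => hs (List.mem_cons_of_mem _ h)
          show (if s = t then κ / t else b' s) = 0
          rw [if_neg hs1]
          exact hb'zero s hs2
        · have h1 : t * (κ / t) = κ := Nat.mul_div_cancel' htκ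
          have h2 : ((q :: rest').map (fun p => p.1 * if p.1 = t then κ / t else b' p.1)).sum
              = ((q :: rest').map (fun p => p.1 * b' p.1)).sum := by
            apply congrArg
            apply List.map_congr_left
            intro a ha
            have ha1 : a.1 ≠ t := by
              intro h; exact hnt (by simpa [← h] using List.mem_map_of_mem (f := Prod.fst) ha)
            simp [ha1]
          show (((t, D) :: q :: rest').map (fun p => p.1 * if p.1 = t then κ / t else b' p.1)).sum = v
          rw [List.map_cons, List.sum_cons, h2, hb'sum, if_pos rfl, h1]
          omega


section Block

open Classical in
/-- one greedy step: add an element keeping the running sum near `m * j` -/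
noncomputable def nextPick (m : ℕ) (w : Multiset ℕ) (u : Multiset ℕ) (j : ℕ) : Multiset ℕ :=
  if h : ∃ v ∈ w - u, (u.sum ≤ m * j → m ≤ v) ∧ (m * j < u.sum → v ≤ m) then
    u + {h.choose}
  else u

noncomputable def chainF (m : ℕ) (w : Multiset ℕ) : ℕ → Multiset ℕ
  | 0 => 0
  | (j+1) => nextPick m w (chainF m w j) j

variable (m : ℕ) (w : Multiset ℕ)

lemma chainF_mono : ∀ j, chainF m w j ≤ chainF m w (j + 1) := by
  intro j
  show chainF m w j ≤ nextPick m w (chainF m w j) j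
  unfold nextPick
  split
  · exact Multiset.le_add_right _ _
  · exact le_refl _

lemma chainF_mono' : ∀ {i j}, i ≤ j → chainF m w i ≤ chainF m w j := by
  intro i j h
  induction j with
  | zero => simp_all
  | succ k ih =>
    rcases Nat.lt_or_ge i (k+1) with h' | h'
    · exact le_trans (ih (by omega)) (chainF_mono m w k)
    · have : i = k + 1 := by omega
      subst this; exact le_refl _

lemma add_singleton_le {u : Multiset ℕ} {v : ℕ} (hu : u ≤ w) (hv : v ∈ w - u) :
    u + {v} ≤ w := by
  rw [Multiset.le_iff_count]
  intro a
  have h1 := (Multiset.le_iff_count.mp hu) a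
  by_cases hav : a = v
  · subst hav
    have h2 : 0 < Multiset.count a (w - u) := Multiset.count_pos.mpr hv
    rw [Multiset.count_sub] at h2
    simp [Multiset.count_singleton]
    omega
  · simp [Multiset.count_singleton, hav]
    omega

lemma chainF_inv (hval : ∀ v ∈ w, v ≤ 2 * m)
    (hsum : w.sum = m * Multiset.card w) (hm : 1 ≤ m) :
    ∀ j, j ≤ Multiset.card w →
      chainF m w j ≤ w ∧ Multiset.card (chainF m w j) = j ∧
      m * j < (chainF m w j).sum + m ∧ (chainF m w j).sum ≤ m * j + m := by
  intro j
  induction j with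
  | zero =>
    intro _
    refine ⟨Multiset.zero_le w, rfl, ?_, ?_⟩
    · show m * 0 < (0 : Multiset ℕ).sum + m
      simp; omega
    · show (0 : Multiset ℕ).sum ≤ m * 0 + m
      simp
  | succ k ih =>
    intro hk
    obtain ⟨hle, hcard, hlo, hhi⟩ := ih (by omega)
    set u := chainF m w k with hu
    -- get the remainder
    obtain ⟨r, hr⟩ := Multiset.le_iff_exists_add.mp hle
    have hrcard : Multiset.card r = Multiset.card w - k := by
      have := congrArg Multiset.card hr
      simp at this; omega
    have hrsum : u.sum + r.sum = w.sum := by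
      have := congrArg Multiset.sum hr
      simp at this; omega
    have hrne : Multiset.card r ≥ 1 := by omega
    have hwu : w - u = r := by
      rw [hr]
      ext a
      rw [Multiset.count_sub]
      simp
    -- existence of a good pick
    have hC1 : 1 ≤ Multiset.card w - k := by omega
    have hex : ∃ v ∈ w - u, (u.sum ≤ m * k → m ≤ v) ∧ (m * k < u.sum → v ≤ m) := by
      rcases le_or_gt u.sum (m * k) with hcase | hcase
      · have hvex : ∃ v ∈ r, m ≤ v := by
          by_contra hc
          push_neg at hc
          have hall : ∀ v ∈ r, v ≤ m - 1 := fun v hv => by have := hc v hv; omega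
          have hb := Multiset.sum_le_card_nsmul r (m - 1) hall
          rw [hrcard, smul_eq_mul] at hb
          have hA : (Multiset.card w - k) * (m - 1) + (Multiset.card w - k)
              = (Multiset.card w - k) * m := by
            rw [Nat.mul_sub_one]
            have : Multiset.card w - k ≤ (Multiset.card w - k) * m :=
              Nat.le_mul_of_pos_right _ (by omega)
            omega
          have hwc : m * Multiset.card w = m * k + (Multiset.card w - k) * m := by
            rw [mul_comm (Multiset.card w - k) m, ← Nat.mul_add]
            congr 1
            omega
          omega
        obtain ⟨v, hvr, hvm⟩ := hvex
        exact ⟨v, by rw [hwu]; exact hvr, fun _ => hvm, fun h => by omega⟩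
      · have hvex : ∃ v ∈ r, v ≤ m := by
          by_contra hc
          push_neg at hc
          have hall : ∀ v ∈ r, m + 1 ≤ v := fun v hv => by have := hc v hv; omega
          have hb := Multiset.card_nsmul_le_sum hall
          rw [hrcard, smul_eq_mul] at hb
          have hA : (Multiset.card w - k) * (m + 1)
              = (Multiset.card w - k) * m + (Multiset.card w - k) := by ring
          have hwc : m * Multiset.card w = m * k + (Multiset.card w - k) * m := by
            rw [mul_comm (Multiset.card w - k) m, ← Nat.mul_add]
            congr 1
            omega
          omega
        obtain ⟨v, hvr, hvm⟩ := hvex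
        exact ⟨v, by rw [hwu]; exact hvr, fun h => by omega, fun _ => hvm⟩
    -- unfold the step
    have hstep : chainF m w (k+1) = u + {hex.choose} := by
      show nextPick m w u k = _
      unfold nextPick
      rw [dif_pos hex]
    obtain ⟨hv_mem, hv1, hv2⟩ := hex.choose_spec
    set v := hex.choose with hvdef
    have hvw : v ∈ w := Multiset.mem_of_le (Multiset.sub_le_self _ _) hv_mem
    have hv2m : v ≤ 2 * m := hval v hvw
    refine ⟨?_, ?_, ?_, ?_⟩
    · rw [hstep]; exact add_singleton_le w hle hv_mem
    · rw [hstep]; simp [hcard]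
    · rw [hstep]; simp only [Multiset.sum_add, Multiset.sum_singleton]
      rcases le_or_gt u.sum (m * k) with hcase | hcase
      · have := hv1 hcase
        have hmk : m * (k+1) = m * k + m := by ring
        omega
      · have hmk : m * (k+1) = m * k + m := by ring
        omega
    · rw [hstep]; simp only [Multiset.sum_add, Multiset.sum_singleton]
      rcases le_or_gt u.sum (m * k) with hcase | hcase
      · have hmk : m * (k+1) = m * k + m := by ring
        omega
      · have := hv2 hcase
        have hmk : m * (k+1) = m * k + m := by ring
        omega

/-- Block extraction lemma -/
lemma block_exists (hm : 1 ≤ m) (hval : ∀ v ∈ w, v ≤ 2 * m)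
    (hsum : w.sum = m * Multiset.card w) (hcard : 1 ≤ Multiset.card w) :
    ∃ u : Multiset ℕ, u ≤ w ∧ 1 ≤ Multiset.card u ∧ Multiset.card u ≤ 2 * m ∧
      u.sum = m * Multiset.card u := by
  rcases le_or_gt (Multiset.card w) (2 * m) with hc | hc
  · exact ⟨w, le_refl _, hcard, hc, hsum⟩
  · -- pigeonhole on chain
    have hinv := chainF_inv m w hval hsum hm
    set g : Fin (2 * m + 1) → ℕ := fun j => (chainF m w j).sum + m - m * j with hg
    have hmaps : ∀ j : Fin (2 * m + 1), g j ∈ Finset.Icc 1 (2 * m) := by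
      intro j
      obtain ⟨_, _, hlo, hhi⟩ := hinv j (by omega)
      simp only [Finset.mem_Icc, hg]
      omega
    have hcardlt : (Finset.Icc 1 (2 * m)).card < Fintype.card (Fin (2 * m + 1)) := by
      rw [Nat.card_Icc, Fintype.card_fin]
      omega
    obtain ⟨a, _, b, _, hab, heq⟩ :=
      Finset.exists_ne_map_eq_of_card_lt_of_maps_to hcardlt (fun j _ => hmaps j)
    -- wlog a < b
    have key : ∀ a b : Fin (2 * m + 1), a < b → g a = g b →
        ∃ u : Multiset ℕ, u ≤ w ∧ 1 ≤ Multiset.card u ∧ Multiset.card u ≤ 2 * m ∧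
          u.sum = m * Multiset.card u := by
      intro a b hlt hgeq
      obtain ⟨haw, hacard, halo, hahi⟩ := hinv a (by omega)
      obtain ⟨hbw, hbcard, hblo, hbhi⟩ := hinv b (by omega)
      have hmono := chainF_mono' m w (le_of_lt (show (a:ℕ) < b from hlt))
      obtain ⟨r, hrdef⟩ := Multiset.le_iff_exists_add.mp hmono
      have hrw : r ≤ w := by
        calc r ≤ chainF m w b := by rw [hrdef]; exact Multiset.le_add_left _ _
        _ ≤ w := hbw
      have hrcard : Multiset.card r = (b : ℕ) - a := by
        have := congrArg Multiset.card hrdef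
        simp at this; omega
      have hrsum : (chainF m w a).sum + r.sum = (chainF m w b).sum := by
        have := congrArg Multiset.sum hrdef
        simp at this; omega
      have hmul : m * ((b:ℕ) - a) + m * a = m * b := by
        rw [← Nat.mul_add]
        congr 1
        omega
      refine ⟨r, hrw, by omega, by omega, ?_⟩
      rw [hrcard]
      simp only [hg] at hgeq
      omega
    rcases Ne.lt_or_gt hab with h | h
    · exact key a b h heq
    · exact key b a h heq.symm

end Block


lemma block_partition (m : ℕ) (hm : 1 ≤ m) :
    ∀ (n : ℕ) (w : Multiset ℕ), Multiset.card w ≤ n → (∀ v ∈ w, v ≤ 2 * m) →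
    w.sum = m * Multiset.card w →
    ∃ B : List (Multiset ℕ), B.sum = w ∧
      ∀ u ∈ B, 1 ≤ Multiset.card u ∧ Multiset.card u ≤ 2 * m ∧
        u.sum = m * Multiset.card u := by
  intro n
  induction n with
  | zero =>
    intro w hw _ _
    have : w = 0 := by
      rw [← Multiset.card_eq_zero]; omega
    exact ⟨[], by simp [this], by simp⟩
  | succ n ih =>
    intro w hw hval hsum
    rcases Nat.eq_zero_or_pos (Multiset.card w) with h0 | h0
    · have : w = 0 := by rw [← Multiset.card_eq_zero]; omega
      exact ⟨[], by simp [this], by simp⟩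
    · obtain ⟨u, hu, hc1, hc2, husum⟩ := block_exists m w hm hval hsum h0
      obtain ⟨r, hr⟩ := Multiset.le_iff_exists_add.mp hu
      have hrcard : Multiset.card u + Multiset.card r = Multiset.card w := by
        rw [hr]; simp
      have hrsum : u.sum + r.sum = w.sum := by rw [hr]; simp
      have hrsum' : r.sum = m * Multiset.card r := by
        have hmul : m * Multiset.card u + m * Multiset.card r = m * Multiset.card w := by
          rw [← Nat.mul_add, hrcard]
        omega
      obtain ⟨B, hBsum, hBprop⟩ := ih r (by omega)
        (fun v hv => hval v (by rw [hr]; exact Multiset.mem_add.mpr (Or.inr hv))) hrsum'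
      refine ⟨u :: B, by simp [hBsum, hr], ?_⟩
      intro x hx
      rcases List.mem_cons.mp hx with rfl | hx'
      · exact ⟨hc1, hc2, husum⟩
      · exact hBprop x hx' 

lemma pick_sublist : ∀ (B : List (Multiset ℕ)) (b : ℕ → ℕ),
    (∀ t, b t ≤ (B.map Multiset.card).count t) →
    ∃ S : List (Multiset ℕ), S.Sublist B ∧ ∀ t, (S.map Multiset.card).count t = b t := by
  intro B
  induction B with
  | nil =>
    intro b hb
    exact ⟨[], List.Sublist.refl _, fun t => by
      have := hb t; simp at this ⊢; omega⟩
  | cons u rest ih =>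
    intro b hb
    have hcount : ∀ t, ((u :: rest).map Multiset.card).count t
        = (rest.map Multiset.card).count t + if Multiset.card u = t then 1 else 0 := by
      intro t
      simp [List.count_cons]
    rcases Nat.eq_zero_or_pos (b (Multiset.card u)) with h0 | h0
    · obtain ⟨S, hS, hScount⟩ := ih b (fun t => by
        have h1 := hb t
        rw [hcount t] at h1
        by_cases ht : Multiset.card u = t
        · subst ht; omega
        · rw [if_neg ht] at h1; omega)
      exact ⟨S, hS.cons u, hScount⟩
    · set b' := Function.update b (Multiset.card u) (b (Multiset.card u) - 1) with hb'
      obtain ⟨S, hS, hScount⟩ := ih b' (fun t => by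
        have h1 := hb t
        rw [hcount t] at h1
        by_cases ht : Multiset.card u = t
        · rw [if_pos ht] at h1
          subst ht
          simp [hb', Function.update_self]
          omega
        · rw [if_neg ht] at h1
          have : b' t = b t := Function.update_of_ne (fun h => ht h.symm) _ _
          omega)
      refine ⟨u :: S, hS.cons₂ u, fun t => ?_⟩
      have hcount2 : ((u :: S).map Multiset.card).count t
          = (S.map Multiset.card).count t + if Multiset.card u = t then 1 else 0 := by
        simp [List.count_cons]
      rw [hcount2, hScount]
      by_cases ht : Multiset.card u = t
      · subst ht
        rw [if_pos rfl]
        simp [hb', Function.update_self]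
        omega
      · rw [if_neg ht]
        have : b' t = b t := Function.update_of_ne (fun h => ht h.symm) _ _
        omega

lemma sublist_sum_le : ∀ (S B : List (Multiset ℕ)), S.Sublist B → S.sum ≤ B.sum := by
  intro S B h
  induction h with
  | slnil => exact le_refl _
  | cons u h ih => simpa using le_trans ih (Multiset.le_add_left _ _)
  | cons_cons u h ih => simpa using add_le_add_left ih u
  
/-- sum of a list of naturals in terms of counts -/
lemma list_sum_eq_count (N : ℕ) : ∀ (l : List ℕ), (∀ x ∈ l, x < N) →
    l.sum = ∑ t ∈ Finset.range N, t * l.count t := by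
  intro l
  induction l with
  | nil => simp
  | cons a l ih =>
    intro hmem
    have ha : a < N := hmem a (by simp)
    have hc : ∀ t, List.count t (a :: l) = List.count t l + if a = t then 1 else 0 := by
      intro t; simp [List.count_cons]
    simp only [List.sum_cons, hc]
    rw [ih (fun x hx => hmem x (by simp [hx]))]
    have hsplit : ∑ t ∈ Finset.range N, t * (List.count t l + if a = t then 1 else 0)
        = ∑ t ∈ Finset.range N, (t * List.count t l + if a = t then t else 0) := by
      apply Finset.sum_congr rfl
      intro t _
      by_cases ht : a = t <;> simp [ht, Nat.mul_add]
    rw [hsplit, Finset.sum_add_distrib, Finset.sum_ite_eq (Finset.range N) a (fun t => t),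
      if_pos (Finset.mem_range.mpr ha)]
    omega



/-- chunk size assigned to coin size t -/
def Dlev (m t : ℕ) : ℕ :=
  if t = 2 * m then 2 * (Finset.Icc 1 (2 * m - 1)).lcm id
  else if m < t then (Finset.Icc 1 (2 * m - 1)).lcm id
  else (Finset.Icc 1 m).lcm id

/-- the pile list: sizes 2m, 2m-1, ..., 1 with their chunk sizes -/
def pileL (m : ℕ) : List (ℕ × ℕ) :=
  (List.range (2 * m)).map (fun k => (2 * m - k, Dlev m (2 * m - k)))


lemma Lm_pos (m : ℕ) : 0 < (Finset.Icc 1 m).lcm id := by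
  rw [Nat.pos_iff_ne_zero, Ne, Finset.lcm_eq_zero_iff]
  intro h
  simp only [Set.mem_image, Finset.mem_coe, Finset.mem_Icc, id] at h
  obtain ⟨x, hx, h0⟩ := h
  omega

lemma Lm_dvd_L (m : ℕ) (hm : 1 ≤ m) :
    (Finset.Icc 1 m).lcm id ∣ (Finset.Icc 1 (2 * m - 1)).lcm id := by
  apply Finset.lcm_dvd
  intro i hi
  simp only [Finset.mem_Icc] at hi
  show i ∣ _
  exact dvd_L hi.1 (by omega)

lemma m_dvd_L (m : ℕ) (hm : 1 ≤ m) : m ∣ (Finset.Icc 1 (2 * m - 1)).lcm id :=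
  dvd_L (by omega) (by omega)

/-- Dlev positivity -/
lemma Dlev_pos (m t : ℕ) : 0 < Dlev m t := by
  unfold Dlev
  split
  · have := L_pos m; omega
  · split
    · exact L_pos m
    · exact Lm_pos m

/-- coin divides its chunk -/
lemma dvd_Dlev (m t : ℕ) (hm : 1 ≤ m) (h1 : 1 ≤ t) (h2 : t ≤ 2 * m) : t ∣ Dlev m t := by
  unfold Dlev
  split
  · rename_i h
    subst h
    exact mul_dvd_mul_left 2 (m_dvd_L m hm)
  · split
    · rename_i hne hlt
      exact dvd_L h1 (by omega)
    · rename_i hne hle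
      exact Finset.dvd_lcm (by simp only [Finset.mem_Icc]; omega)

/-- chunk of smaller coin divides chunk of bigger coin -/
lemma Dlev_chain (m t : ℕ) (hm : 1 ≤ m) (h1 : 2 ≤ t) (h2 : t ≤ 2 * m) :
    Dlev m (t - 1) ∣ Dlev m t := by
  have hL := Lm_dvd_L m hm
  unfold Dlev
  by_cases hA : t = 2 * m
  · rw [if_pos hA]
    by_cases hB : t - 1 = 2 * m
    · omega
    · rw [if_neg hB]
      by_cases hC : m < t - 1
      · rw [if_pos hC]; exact Dvd.dvd.mul_left (dvd_refl _) 2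
      · rw [if_neg hC]; exact hL.trans (Dvd.dvd.mul_left (dvd_refl _) 2)
  · rw [if_neg hA]
    have hB : t - 1 ≠ 2 * m := by omega
    rw [if_neg hB]
    by_cases hC : m < t
    · rw [if_pos hC]
      by_cases hD : m < t - 1
      · rw [if_pos hD]
      · rw [if_neg hD]; exact hL
    · rw [if_neg hC]
      have hD : ¬ m < t - 1 := by omega
      rw [if_neg hD]

lemma pileL_chain (m : ℕ) (hm : 1 ≤ m) :
    List.Chain' (fun a b => b.2 ∣ a.2) (pileL m) := by
  unfold pileL
  show List.IsChain _ _
  rw [List.isChain_map]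
  have h2m : 2 * m = (2 * m - 1) + 1 := by omega
  rw [h2m, List.isChain_range_succ]
  intro k hk
  -- need: Dlev m (2m - (k+1)) ∣ Dlev m (2m - k)
  have h1 : 2 * m - (k + 1) = (2 * m - k) - 1 := by omega
  rw [← h2m, h1]
  exact Dlev_chain m (2 * m - k) hm (by omega) (by omega)

lemma pileL_mem (m : ℕ) {p : ℕ × ℕ} (hp : p ∈ pileL m) :
    1 ≤ p.1 ∧ p.1 ≤ 2 * m ∧ p.2 = Dlev m p.1 := by
  unfold pileL at hp
  simp only [List.mem_map, List.mem_range] at hp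
  obtain ⟨k, hk, rfl⟩ := hp
  exact ⟨by omega, by omega, rfl⟩

lemma pileL_nodup (m : ℕ) : ((pileL m).map Prod.fst).Nodup := by
  unfold pileL
  rw [List.map_map]
  have : (Prod.fst ∘ fun k => (2 * m - k, Dlev m (2 * m - k))) = fun k => 2 * m - k := rfl
  rw [this]
  exact (List.nodup_range (n := 2 * m)).map_on (fun a ha b hb h => by
    simp only [List.mem_range] at ha hb; omega)

lemma pileL_head (m : ℕ) (hm : 1 ≤ m) :
    (pileL m).head? = some (2 * m, 2 * (Finset.Icc 1 (2 * m - 1)).lcm id) := by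
  unfold pileL
  have h2m : 2 * m = (2 * m - 1) + 1 := by omega
  rw [h2m, List.range_succ_eq_map]
  simp [Dlev, ← h2m]

/-- list-range sum to Finset sum -/
lemma list_range_map_sum (n : ℕ) (g : ℕ → ℕ) :
    ((List.range n).map g).sum = ∑ k ∈ Finset.range n, g k := by
  induction n with
  | zero => simp
  | succ n ih => rw [List.range_succ, Finset.sum_range_succ]; simp [ih]

lemma pileL_sum (m : ℕ) (g : ℕ × ℕ → ℕ) :
    ((pileL m).map g).sum = ∑ k ∈ Finset.range (2 * m), g (2 * m - k, Dlev m (2 * m - k)) := by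
  unfold pileL
  rw [List.map_map]
  exact list_range_map_sum (2 * m) _

/-- reindex: sums over sizes t = 1..2m -/
lemma pileL_sum' (m : ℕ) (g : ℕ × ℕ → ℕ) :
    ((pileL m).map g).sum = ∑ t ∈ Finset.range (2 * m), g (t + 1, Dlev m (t + 1)) := by
  rw [pileL_sum]
  have := Finset.sum_range_reflect (fun t => g (t + 1, Dlev m (t + 1))) (2 * m)
  rw [← this]
  apply Finset.sum_congr rfl
  intro k hk
  simp only [Finset.mem_range] at hk
  have h : 2 * m - 1 - k + 1 = 2 * m - k := by omega
  rw [h]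

lemma mul_Lm_le (m : ℕ) (hm2 : 2 ≤ m) :
    m * (Finset.Icc 1 m).lcm id ≤ (Finset.Icc 1 (2 * m - 1)).lcm id := by
  obtain ⟨p, hp, h1, h2⟩ := Nat.bertrand m (by omega)
  have hp2m : p ≠ 2 * m := by
    intro h
    have h2d : (2 : ℕ) ∣ p := ⟨m, h⟩
    rcases (Nat.Prime.eq_one_or_self_of_dvd hp 2 h2d) with hc | hc <;> omega
  have hpL : p ∣ (Finset.Icc 1 (2 * m - 1)).lcm id := dvd_L (by omega) (by omega)
  have hΛL : (Finset.Icc 1 m).lcm id ∣ (Finset.Icc 1 (2 * m - 1)).lcm id := Lm_dvd_L m (by omega)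
  have hnd : ¬ p ∣ (Finset.Icc 1 m).lcm id := by
    intro hdvd
    have hprod : (Finset.Icc 1 m).lcm id ∣ ∏ i ∈ Finset.Icc 1 m, i :=
      Finset.lcm_dvd (fun i hi => by
        show i ∣ _
        exact Finset.dvd_prod_of_mem _ hi)
    have hpp : p ∣ ∏ i ∈ Finset.Icc 1 m, i := hdvd.trans hprod
    obtain ⟨i, hi, hpi⟩ := (Nat.Prime.prime hp).exists_mem_finset_dvd hpp
    simp only [Finset.mem_Icc] at hi
    have : p ≤ i := Nat.le_of_dvd (by omega) hpi
    omega
  have hcop : Nat.Coprime p ((Finset.Icc 1 m).lcm id) :=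
    (Nat.Prime.coprime_iff_not_dvd hp).mpr hnd
  have hmul : p * (Finset.Icc 1 m).lcm id ∣ (Finset.Icc 1 (2 * m - 1)).lcm id :=
    Nat.Coprime.mul_dvd_of_dvd_of_dvd hcop hpL hΛL
  have h3 : p * (Finset.Icc 1 m).lcm id ≤ (Finset.Icc 1 (2 * m - 1)).lcm id :=
    Nat.le_of_dvd (L_pos m) hmul
  have h4 : m * (Finset.Icc 1 m).lcm id ≤ p * (Finset.Icc 1 m).lcm id :=
    Nat.mul_le_mul_right _ (by omega)
  omega

lemma waste_le (m : ℕ) (hm : 1 ≤ m) :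
    ∑ t ∈ Finset.range (2 * m), (Dlev m (t + 1) - (t + 1)) ≤ fJP m := by
  rcases Nat.lt_or_ge m 4 with hm4 | hm4
  · interval_cases m
    · decide
    · decide
    · decide
  · -- m ≥ 4
    set L := (Finset.Icc 1 (2 * m - 1)).lcm id with hL
    set Λ := (Finset.Icc 1 m).lcm id with hΛ
    have hfJP : fJP m = (2 * m - 2) * L := by
      unfold fJP; rw [if_neg (by omega)]
    have hsplit1 : Finset.range (2 * m) = Finset.Ico 0 (2 * m) := by
      rw [Finset.range_eq_Ico]
    rw [hsplit1]
    rw [← Finset.sum_Ico_consecutive _ (by omega : 0 ≤ m) (by omega : m ≤ 2 * m)]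
    rw [← Finset.sum_Ico_consecutive _ (by omega : m ≤ 2 * m - 1) (by omega : 2 * m - 1 ≤ 2 * m)]
    have hbound1 : ∑ k ∈ Finset.Ico 0 m, (Dlev m (k + 1) - (k + 1)) ≤ m * Λ := by
      have := Finset.sum_le_card_nsmul (Finset.Ico 0 m)
        (fun k => Dlev m (k + 1) - (k + 1)) Λ (fun k hk => by
          simp only [Finset.mem_Ico] at hk
          have : Dlev m (k + 1) = Λ := by
            unfold Dlev
            rw [if_neg (by omega), if_neg (by omega)]
          show Dlev m (k + 1) - (k + 1) ≤ Λ
          omega)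
      simpa [Nat.card_Ico, smul_eq_mul] using this
    have hbound2 : ∑ k ∈ Finset.Ico m (2 * m - 1), (Dlev m (k + 1) - (k + 1)) ≤ (m - 1) * L := by
      have := Finset.sum_le_card_nsmul (Finset.Ico m (2 * m - 1))
        (fun k => Dlev m (k + 1) - (k + 1)) L (fun k hk => by
          simp only [Finset.mem_Ico] at hk
          have : Dlev m (k + 1) = L := by
            unfold Dlev
            rw [if_neg (by omega), if_pos (by omega)]
          show Dlev m (k + 1) - (k + 1) ≤ L
          omega)
      have hc : (Finset.Ico m (2 * m - 1)).card = m - 1 := by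
        rw [Nat.card_Ico]; omega
      rw [hc, smul_eq_mul] at this
      exact this
    have hbound3 : ∑ k ∈ Finset.Ico (2 * m - 1) (2 * m), (Dlev m (k + 1) - (k + 1)) ≤ 2 * L := by
      have h1 : Finset.Ico (2 * m - 1) (2 * m) = {2 * m - 1} := by
        apply Finset.eq_singleton_iff_unique_mem.mpr
        constructor
        · simp only [Finset.mem_Ico]; omega
        · intro x hx; simp only [Finset.mem_Ico] at hx; omega
      rw [h1, Finset.sum_singleton]
      have h2 : 2 * m - 1 + 1 = 2 * m := by omega
      rw [h2]
      unfold Dlev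
      rw [if_pos rfl]
      omega
    have hΛle : m * Λ ≤ L := mul_Lm_le m (by omega)
    have hfinal : m * Λ + ((m - 1) * L + 2 * L) ≤ (2 * m - 2) * L := by
      have : (m - 1) * L + 2 * L + L ≤ (2 * m - 2) * L := by
        have h5 : (m - 1) + 2 + 1 ≤ 2 * m - 2 := by omega
        calc (m - 1) * L + 2 * L + L = ((m - 1) + 2 + 1) * L := by ring
        _ ≤ (2 * m - 2) * L := Nat.mul_le_mul_right _ h5
      omega
    rw [hfJP]
    omega

-- extraction and partition layer (to be appended)
lemma card_listsum : ∀ S : List (Multiset ℕ), Multiset.card S.sum = (S.map Multiset.card).sum := by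
  intro S
  induction S with
  | nil => simp
  | cons u S ih => simp [ih]

lemma sum_listsum : ∀ S : List (Multiset ℕ), (S.sum).sum = (S.map Multiset.sum).sum := by
  intro S
  induction S with
  | nil => simp
  | cons u S ih => simp [ih]

lemma sum_blocks (m : ℕ) : ∀ S : List (Multiset ℕ),
    (∀ u ∈ S, u.sum = m * Multiset.card u) →
    (S.sum).sum = m * Multiset.card S.sum := by
  intro S
  induction S with
  | nil => intro _; simp
  | cons u S ih =>
    intro h
    have h1 : u.sum = m * Multiset.card u := h u (by simp)
    have h2 := ih (fun v hv => h v (by simp [hv]))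
    simp only [List.sum_cons, Multiset.sum_add, Multiset.card_add, Nat.mul_add, h1, h2]

/-- Extraction lemma: peel off one part of size `fJP m` -/
lemma extract_part (m : ℕ) (hm : 1 ≤ m) (w : Multiset ℕ)
    (hval : ∀ v ∈ w, v ≤ 2 * m) (hsum : w.sum = m * Multiset.card w)
    (hcard : 2 * fJP m ≤ Multiset.card w) :
    ∃ y : Multiset ℕ, y ≤ w ∧ Multiset.card y = fJP m ∧ y.sum = m * fJP m := by
  obtain ⟨B, hBsum, hBprop⟩ := block_partition m hm (Multiset.card w) w (le_refl _) hval hsum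
  set c : ℕ → ℕ := fun t => (B.map Multiset.card).count t with hc
  -- the cards of blocks are in [1, 2m]
  have hBcards : ∀ x ∈ B.map Multiset.card, x < 2 * m + 1 := by
    intro x hx
    simp only [List.mem_map] at hx
    obtain ⟨u, hu, rfl⟩ := hx
    have := (hBprop u hu).2.1
    omega
  -- total capacity equals card w
  have hcap_eq : ((pileL m).map (fun p => p.1 * c p.1)).sum = Multiset.card w := by
    rw [pileL_sum' m (fun p => p.1 * c p.1)]
    have hred : ∑ t ∈ Finset.range (2 * m),
          ((t + 1, Dlev m (t + 1)) : ℕ × ℕ).1 * c ((t + 1, Dlev m (t + 1)) : ℕ × ℕ).1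
        = ∑ t ∈ Finset.range (2 * m), (t + 1) * c (t + 1) :=
      Finset.sum_congr rfl (fun t _ => rfl)
    rw [hred]
    have h1 : (B.map Multiset.card).sum = ∑ t ∈ Finset.range (2 * m + 1), t * c t :=
      list_sum_eq_count (2 * m + 1) _ hBcards
    have h2 : (B.map Multiset.card).sum = Multiset.card w := by
      rw [← hBsum, card_listsum]
    have h3 : ∑ t ∈ Finset.range (2 * m + 1), t * c t
        = (∑ t ∈ Finset.range (2 * m), (t + 1) * c (t + 1)) + 0 * c 0 :=
      Finset.sum_range_succ' _ _
    simp only [Nat.zero_mul, Nat.add_zero] at h3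
    -- goal: ∑ t ∈ range (2m), (t+1) * c (t+1) = card w
    omega
  -- waste bound
  have hwaste : ((pileL m).map (fun p => p.2 - p.1)).sum ≤ fJP m := by
    rw [pileL_sum' m (fun p => p.2 - p.1)]
    have h1 : ∀ t ∈ Finset.range (2 * m), Dlev m (t + 1) - (t + 1)
        = (fun p : ℕ × ℕ => p.2 - p.1) (t + 1, Dlev m (t + 1)) := fun t _ => rfl
    calc (∑ t ∈ Finset.range (2 * m), (fun p : ℕ × ℕ => p.2 - p.1) (t + 1, Dlev m (t + 1)))
        = ∑ t ∈ Finset.range (2 * m), (Dlev m (t + 1) - (t + 1)) := by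
          apply Finset.sum_congr rfl
          intro t ht
          rfl
      _ ≤ fJP m := waste_le m hm
  -- apply chunk lemma
  obtain ⟨b, hble, hbzero, hbsum⟩ := chunk (pileL m) c (fJP m)
    (pileL_chain m hm)
    (fun p hp => by
      obtain ⟨h1, h2, h3⟩ := pileL_mem m hp
      exact ⟨by omega, h3 ▸ dvd_Dlev m p.1 hm h1 h2, h3 ▸ Dlev_pos m p.1⟩)
    (pileL_nodup m)
    (fun p hp => by
      rw [pileL_head m hm] at hp
      simp only [Option.some.injEq] at hp
      subst hp
      exact twoL_dvd_fJP m hm)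
    (fun h => by
      have := pileL_head m hm
      rw [h] at this
      simp at this)
    (by omega)
  -- select blocks
  obtain ⟨S, hSsub, hScount⟩ := pick_sublist B b (fun t => hble t)
  have hcardS : (S.map Multiset.card).sum = fJP m := by
    have h1 : (S.map Multiset.card).sum = ∑ t ∈ Finset.range (2 * m + 1), t * b t := by
      have hb1 : ∀ x ∈ S.map Multiset.card, x < 2 * m + 1 := by
        intro x hx
        simp only [List.mem_map] at hx
        obtain ⟨u, hu, rfl⟩ := hx
        have := (hBprop u (hSsub.subset hu)).2.1
        omega
      have h0 := list_sum_eq_count (2 * m + 1) (S.map Multiset.card) hb1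
      rw [h0]
      apply Finset.sum_congr rfl
      intro t _
      rw [hScount t]
    have h2 : ((pileL m).map (fun p => p.1 * b p.1)).sum
        = ∑ t ∈ Finset.range (2 * m + 1), t * b t := by
      rw [pileL_sum' m (fun p => p.1 * b p.1)]
      have h3 : ∑ t ∈ Finset.range (2 * m + 1), t * b t
          = (∑ t ∈ Finset.range (2 * m), (t + 1) * b (t + 1)) + 0 * b 0 :=
        Finset.sum_range_succ' _ _
      simp only [Nat.zero_mul, Nat.add_zero] at h3
      rw [h3]
    omega
  refine ⟨S.sum, ?_, ?_, ?_⟩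
  · rw [← hBsum]
    exact sublist_sum_le S B hSsub
  · rw [card_listsum]
    exact hcardS
  · have hSprop : ∀ u ∈ S, u.sum = m * Multiset.card u :=
      fun u hu => (hBprop u (hSsub.subset hu)).2.2
    rw [sum_blocks m S hSprop, card_listsum, hcardS]

/-- partition the whole pool into K parts -/
lemma partition_parts (m : ℕ) (hm : 1 ≤ m) : ∀ (K : ℕ) (w : Multiset ℕ),
    (∀ v ∈ w, v ≤ 2 * m) → Multiset.card w = K * fJP m →
    w.sum = m * Multiset.card w →
    ∃ P : List (Multiset ℕ), P.length = K ∧ P.sum = w ∧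
      ∀ u ∈ P, Multiset.card u = fJP m ∧ u.sum = m * fJP m := by
  intro K
  induction K with
  | zero =>
    intro w _ hcard _
    have : w = 0 := by rw [← Multiset.card_eq_zero]; omega
    exact ⟨[], rfl, by simp [this], by simp⟩
  | succ K ih =>
    intro w hval hcard hsum
    rcases Nat.eq_zero_or_pos K with hK | hK
    · subst hK
      refine ⟨[w], rfl, by simp, ?_⟩
      intro u hu
      simp only [List.mem_singleton] at hu
      subst hu
      constructor
      · omega
      · rw [hsum, hcard]; ring
    · have hfpos : 0 < fJP m := fJP_pos m hm
      have h2f : 2 * fJP m ≤ Multiset.card w := by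
        have : 2 * fJP m ≤ (K + 1) * fJP m := Nat.mul_le_mul_right _ (by omega)
        omega
      obtain ⟨y, hyle, hycard, hysum⟩ := extract_part m hm w hval hsum h2f
      obtain ⟨r, hr⟩ := Multiset.le_iff_exists_add.mp hyle
      have hrcard : Multiset.card y + Multiset.card r = Multiset.card w := by
        rw [hr]; simp
      have hrsum : y.sum + r.sum = w.sum := by rw [hr]; simp
      have hrcard' : Multiset.card r = K * fJP m := by
        have : (K + 1) * fJP m = K * fJP m + fJP m := by ring
        omega
      have hrsum' : r.sum = m * Multiset.card r := by
        have h1 : m * Multiset.card y + m * Multiset.card r = m * Multiset.card w := by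
          rw [← Nat.mul_add, hrcard]
        have h2 : m * Multiset.card y = m * fJP m := by rw [hycard]
        omega
      obtain ⟨P, hPlen, hPsum, hPprop⟩ := ih r
        (fun v hv => hval v (by rw [hr]; exact Multiset.mem_add.mpr (Or.inr hv)))
        hrcard' hrsum'
      refine ⟨y :: P, by simp [hPlen], by simp [hPsum, hr], ?_⟩
      intro u hu
      rcases List.mem_cons.mp hu with rfl | hu'
      · exact ⟨hycard, hysum⟩
      · exact hPprop u hu'

/-- count of a value in a multiset with elements < N, in terms of sums -/
lemma count_card_sum (N : ℕ) (u : Multiset ℕ) (hu : ∀ v ∈ u, v < N) :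
    (∑ i ∈ Finset.range N, Multiset.count i u) = Multiset.card u ∧
    (∑ i ∈ Finset.range N, i * Multiset.count i u) = u.sum := by
  induction u using Multiset.induction_on with
  | empty => simp
  | cons a u ih =>
    have ha : a < N := hu a (by simp)
    obtain ⟨ih1, ih2⟩ := ih (fun v hv => hu v (by simp [hv]))
    have hcc : ∀ i, Multiset.count i (a ::ₘ u) = Multiset.count i u + if i = a then 1 else 0 :=
      fun i => Multiset.count_cons i a u
    constructor
    · rw [Multiset.card_cons, ← ih1]
      simp only [hcc]
      rw [Finset.sum_add_distrib, Finset.sum_ite_eq' (Finset.range N) a (fun _ => 1),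
        if_pos (Finset.mem_range.mpr ha)]
    · rw [Multiset.sum_cons, ← ih2]
      simp only [hcc]
      have hexp : ∀ i ∈ Finset.range N,
          i * (Multiset.count i u + if i = a then 1 else 0)
          = i * Multiset.count i u + (if i = a then i else 0) := by
        intro i _
        by_cases h : i = a <;> simp [h, Nat.mul_add]
      rw [Finset.sum_congr rfl hexp, Finset.sum_add_distrib,
        Finset.sum_ite_eq' (Finset.range N) a (fun i => i),
        if_pos (Finset.mem_range.mpr ha)]
      omega

lemma card_finsum {α : Type*} (s : Finset α) (g : α → Multiset ℕ) :
    Multiset.card (∑ i ∈ s, g i) = ∑ i ∈ s, Multiset.card (g i) := by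
  classical
  induction s using Finset.induction_on with
  | empty => simp
  | insert a s' h ih => simp [Finset.sum_insert h, ih]

lemma sum_finsum {α : Type*} (s : Finset α) (g : α → Multiset ℕ) :
    (∑ i ∈ s, g i).sum = ∑ i ∈ s, (g i).sum := by
  classical
  induction s using Finset.induction_on with
  | empty => simp
  | insert a s' h ih => simp [Finset.sum_insert h, ih]

lemma listmem_le_sum : ∀ (P : List (Multiset ℕ)) (u : Multiset ℕ), u ∈ P → u ≤ P.sum := by
  intro P
  induction P with
  | nil => intro u hu; simp at hu
  | cons v P ih =>
    intro u hu
    rcases List.mem_cons.mp hu with rfl | hu'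
    · simp only [List.sum_cons]
      exact Multiset.le_add_right _ _
    · simp only [List.sum_cons]
      exact le_trans (ih u hu') (Multiset.le_add_left _ _)

lemma sum_getD_count (v : ℕ) : ∀ (P : List (Multiset ℕ)),
    ∑ j ∈ Finset.range P.length, Multiset.count v (P.getD j 0) = Multiset.count v P.sum := by
  intro P
  induction P with
  | nil => simp
  | cons u P ih =>
    have h1 : ∑ j ∈ Finset.range (P.length + 1), Multiset.count v ((u :: P).getD j 0)
        = (∑ j ∈ Finset.range P.length, Multiset.count v ((u :: P).getD (j + 1) 0))
          + Multiset.count v ((u :: P).getD 0 0) :=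
      Finset.sum_range_succ' _ _
    simp only [List.length_cons]
    rw [h1]
    have h2 : ∀ j, (u :: P).getD (j + 1) 0 = P.getD j 0 := fun j => rfl
    simp only [h2]
    rw [ih]
    simp [Multiset.count_add]
    omega

theorem stmt7 (m β : ℕ) (hm : 1 ≤ m) (hβ : 0 < β) (hdiv : fJP m ∣ β)
    (x : Fin (2 * m + 1) → ℕ)
    (h1 : (∑ i : Fin (2 * m + 1), i.1 * x i) = 2 * m * β)
    (h2 : (∑ i, x i) = 2 * β) :
    ∃ y : Fin (2 * m + 1) → Fin (2 * β / fJP m) → ℕ,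
      (∀ j, (∑ i : Fin (2 * m + 1), i.1 * y i j) = m * fJP m) ∧
      (∀ j, (∑ i, y i j) = fJP m) ∧
      (∀ i, (∑ j, y i j) = x i) := by
  have hfpos : 0 < fJP m := fJP_pos m hm
  obtain ⟨q, hq⟩ := hdiv
  have hK : 2 * β = (2 * q) * fJP m := by rw [hq]; ring
  have hKdiv : 2 * β / fJP m = 2 * q := by
    rw [hK]
    exact Nat.mul_div_cancel _ hfpos
  set w : Multiset ℕ := ∑ i : Fin (2 * m + 1), Multiset.replicate (x i) i.1 with hw
  have hwcard : Multiset.card w = 2 * β := by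
    rw [hw, card_finsum]
    simp only [Multiset.card_replicate]
    exact h2
  have hwsum : w.sum = 2 * m * β := by
    rw [hw, sum_finsum]
    have : ∀ i : Fin (2 * m + 1), (Multiset.replicate (x i) i.1).sum = i.1 * x i := by
      intro i
      rw [Multiset.sum_replicate, smul_eq_mul, Nat.mul_comm]
    rw [Finset.sum_congr rfl (fun i _ => this i)]
    exact h1
  have hwsum' : w.sum = m * Multiset.card w := by
    rw [hwsum, hwcard]; ring
  have hwval : ∀ v ∈ w, v ≤ 2 * m := by
    intro v hv
    rw [hw, Multiset.mem_sum] at hv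
    obtain ⟨i, _, hvi⟩ := hv
    have := Multiset.eq_of_mem_replicate hvi
    subst this
    omega
  have hwcount : ∀ i : Fin (2 * m + 1), Multiset.count i.1 w = x i := by
    intro i
    rw [hw, Multiset.count_sum']
    rw [Finset.sum_eq_single i]
    · rw [Multiset.count_replicate, if_pos rfl]
    · intro j _ hji
      rw [Multiset.count_replicate, if_neg]
      exact fun h => hji (Fin.val_injective h)
    · intro h
      exact absurd (Finset.mem_univ i) h
  obtain ⟨P, hPlen, hPsum, hPprop⟩ := partition_parts m hm (2 * q) w hwval
    (by rw [hwcard, hK]) hwsum'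
  have hj_lt : ∀ j : Fin (2 * β / fJP m), j.1 < P.length := by
    intro j
    have := j.2
    omega
  refine ⟨fun i j => Multiset.count i.1 (P.getD j.1 0), ?_, ?_, ?_⟩
  · intro j
    have hjm : P.getD j.1 0 ∈ P := by
      rw [List.getD_eq_getElem P 0 (hj_lt j)]
      exact List.getElem_mem _
    obtain ⟨hucard, husum⟩ := hPprop _ hjm
    have hle : P.getD j.1 0 ≤ w := by
      rw [← hPsum]
      exact listmem_le_sum P _ hjm
    have huval : ∀ v ∈ P.getD j.1 0, v < 2 * m + 1 := by
      intro v hv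
      have := hwval v (Multiset.mem_of_le hle hv)
      omega
    have := (count_card_sum (2 * m + 1) (P.getD j.1 0) huval).2
    rw [Fin.sum_univ_eq_sum_range (fun i => i * Multiset.count i (P.getD j.1 0))]
    rw [this, husum]
  · intro j
    have hjm : P.getD j.1 0 ∈ P := by
      rw [List.getD_eq_getElem P 0 (hj_lt j)]
      exact List.getElem_mem _
    obtain ⟨hucard, husum⟩ := hPprop _ hjm
    have hle : P.getD j.1 0 ≤ w := by
      rw [← hPsum]
      exact listmem_le_sum P _ hjm
    have huval : ∀ v ∈ P.getD j.1 0, v < 2 * m + 1 := by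
      intro v hv
      have := hwval v (Multiset.mem_of_le hle hv)
      omega
    have := (count_card_sum (2 * m + 1) (P.getD j.1 0) huval).1
    rw [Fin.sum_univ_eq_sum_range (fun i => Multiset.count i (P.getD j.1 0))]
    rw [this, hucard]
  · intro i
    rw [Fin.sum_univ_eq_sum_range (fun j => Multiset.count i.1 (P.getD j 0))]
    have hrw : 2 * β / fJP m = P.length := by omega
    rw [hrw, sum_getD_count, hPsum, hwcount]
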